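/- Let R be a nonzero M×M positive semidefinite Hermitian matrix, σ² > 0, α₀ > 0, K ≥ 1. Then the equation τ = (α₀/K)·Tr{R(R·α₀/(1+τ) + σ²I)⁻¹} admits a unique positive solution τ̄. -/

import Mathlib

open Matrix Filter
open scoped ComplexOrder

/-- Trace formula via spectral decomposition. -/
lemma aux_trace (M : ℕ) (R : Matrix (Fin M) (Fin M) ℂ) (hR : R.PosSemidef)
    (c σ2 : ℝ) (hc : 0 ≤ c) (hσ : 0 < σ2) :
    Matrix.trace (R * (c • R + σ2 • (1 : Matrix (Fin M) (Fin M) ℂ))⁻¹)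
      = ((∑ i, hR.1.eigenvalues i / (c * hR.1.eigenvalues i + σ2) : ℝ) : ℂ) := by
  classical
  set U : Matrix (Fin M) (Fin M) ℂ := (hR.1.eigenvectorUnitary : Matrix (Fin M) (Fin M) ℂ) with hUdef
  have hU1 : U * star U = 1 := (Matrix.mem_unitaryGroup_iff).mp hR.1.eigenvectorUnitary.2
  have hU2 : star U * U = 1 := (Matrix.mem_unitaryGroup_iff').mp hR.1.eigenvectorUnitary.2
  set ev : Fin M → ℝ := hR.1.eigenvalues with hev
  have hev0 : ∀ i, 0 ≤ ev i := fun i => hR.eigenvalues_nonneg i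
  have hden : ∀ i, 0 < c * ev i + σ2 := fun i =>
    add_pos_of_nonneg_of_pos (mul_nonneg hc (hev0 i)) hσ
  set D : Matrix (Fin M) (Fin M) ℂ := diagonal (fun i => (ev i : ℂ)) with hD
  have hspec : R = U * D * star U := by
    have := hR.1.spectral_theorem
    rw [Unitary.conjStarAlgAut_apply] at this
    exact this
  set E : Matrix (Fin M) (Fin M) ℂ := diagonal (fun i => ((c * ev i + σ2 : ℝ) : ℂ)) with hE
  set E' : Matrix (Fin M) (Fin M) ℂ := diagonal (fun i => (((c * ev i + σ2 : ℝ))⁻¹ : ℂ)) with hE'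
  have hA : c • R + σ2 • (1 : Matrix (Fin M) (Fin M) ℂ) = U * E * star U := by
    rw [hspec, ← hU1]
    rw [show c • (U * D * star U) = U * (c • D) * star U by
      simp [Matrix.mul_smul, Matrix.smul_mul]]
    rw [show σ2 • (U * star U) = U * (σ2 • (1 : Matrix (Fin M) (Fin M) ℂ)) * star U by
      simp [Matrix.mul_smul, Matrix.smul_mul]]
    rw [← Matrix.add_mul, ← Matrix.mul_add]
    congr 2
    ext i j
    by_cases h : i = j <;>
      simp [hD, hE, diagonal, h, Matrix.one_apply, Complex.real_smul] <;> push_cast <;> ring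
  have hEE' : E * E' = 1 := by
    rw [hE, hE', diagonal_mul_diagonal]
    have h1 : (fun i => ((c * ev i + σ2 : ℝ) : ℂ) * (((c * ev i + σ2 : ℝ) : ℂ))⁻¹)
        = fun _ => (1 : ℂ) := funext fun i =>
      mul_inv_cancel₀ (by exact_mod_cast (hden i).ne')
    rw [h1, Matrix.diagonal_one]
  have hinv : (c • R + σ2 • (1 : Matrix (Fin M) (Fin M) ℂ))⁻¹ = U * E' * star U := by
    apply Matrix.inv_eq_right_inv
    rw [hA]
    calc U * E * star U * (U * E' * star U) = U * (E * ((star U * U) * E')) * star U := by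
          noncomm_ring
      _ = 1 := by rw [hU2, one_mul, hEE', mul_one, hU1]
  rw [hinv, hspec]
  have : U * D * star U * (U * E' * star U) = U * (D * E') * star U := by
    calc U * D * star U * (U * E' * star U) = U * (D * ((star U * U) * E')) * star U := by
          noncomm_ring
      _ = U * (D * E') * star U := by rw [hU2, one_mul]
  rw [this, Matrix.trace_mul_comm, ← Matrix.mul_assoc, hU2, one_mul, hD, hE',
    diagonal_mul_diagonal, Matrix.trace_diagonal]
  push_cast
  simp [div_eq_mul_inv]

lemma aux_core (M : ℕ) (ev : Fin M → ℝ) (hev : ∀ i, 0 ≤ ev i)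
    (i₀ : Fin M) (hi₀ : 0 < ev i₀) (σ2 α0 Kr : ℝ) (hσ : 0 < σ2) (hα : 0 < α0) (hK : 0 < Kr) :
    ∃! τ : ℝ, 0 < τ ∧ τ = (α0 / Kr) * ∑ i, ev i / ((α0 / (1 + τ)) * ev i + σ2) := by
  classical
  have hαK : 0 < α0 / Kr := div_pos hα hK
  set d : Fin M → ℝ → ℝ := fun i τ => α0 * ev i * (τ / (1 + τ)) + σ2 * τ with hd
  set φ : ℝ → ℝ := fun τ => (α0 / Kr) * ∑ i, ev i / d i τ with hφ
  have hdpos : ∀ i, ∀ τ : ℝ, 0 < τ → 0 < d i τ := by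
    intro i τ hτ
    have h1 : 0 < 1 + τ := by linarith
    have : 0 ≤ α0 * ev i * (τ / (1 + τ)) :=
      mul_nonneg (mul_nonneg hα.le (hev i)) (div_nonneg hτ.le h1.le)
    have : 0 < σ2 * τ := mul_pos hσ hτ
    simp only [hd]; linarith
  have hdmono : ∀ i, ∀ a b : ℝ, 0 < a → a < b → d i a < d i b := by
    intro i a b ha hab
    have h1a : (0:ℝ) < 1 + a := by linarith
    have h1b : (0:ℝ) < 1 + b := by linarith
    have hq : a / (1 + a) ≤ b / (1 + b) := by
      rw [div_le_div_iff₀ h1a h1b]; nlinarith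
    have h2 : α0 * ev i * (a / (1 + a)) ≤ α0 * ev i * (b / (1 + b)) :=
      mul_le_mul_of_nonneg_left hq (mul_nonneg hα.le (hev i))
    have h3 : σ2 * a < σ2 * b := by nlinarith
    simp only [hd]; linarith
  -- F τ = τ * φ τ for τ > 0
  have hFφ : ∀ τ : ℝ, 0 < τ →
      (α0 / Kr) * ∑ i, ev i / ((α0 / (1 + τ)) * ev i + σ2) = τ * φ τ := by
    intro τ hτ
    have h1 : (0:ℝ) < 1 + τ := by linarith
    simp only [hφ]
    rw [mul_comm τ _, mul_assoc]
    congr 1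
    rw [Finset.sum_mul]
    apply Finset.sum_congr rfl
    intro i _
    have hdi : d i τ = ((α0 / (1 + τ)) * ev i + σ2) * τ := by
      simp only [hd]; field_simp
    have hDpos : 0 < (α0 / (1 + τ)) * ev i + σ2 :=
      add_pos_of_nonneg_of_pos (mul_nonneg (div_pos hα h1).le (hev i)) hσ
    rw [hdi, div_mul_eq_div_div]
    exact (div_mul_cancel₀ _ hτ.ne').symm
  have hanti : StrictAntiOn φ (Set.Ioi (0:ℝ)) := by
    intro a ha b hb hab
    simp only [Set.mem_Ioi] at ha hb
    apply mul_lt_mul_of_pos_left _ hαK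
    apply Finset.sum_lt_sum
    · intro i _
      exact div_le_div_of_nonneg_left (hev i) (hdpos i a ha) (hdmono i a b ha hab).le
    · exact ⟨i₀, Finset.mem_univ _,
        div_lt_div_of_pos_left hi₀ (hdpos i₀ a ha) (hdmono i₀ a b ha hab)⟩
  -- choose endpoints
  set c₀ : ℝ := ((α0 / Kr) * ev i₀) / (α0 * ev i₀ + σ2) with hc₀
  have hc₀pos : 0 < c₀ := div_pos (mul_pos hαK hi₀) (by positivity)
  set a : ℝ := c₀ / 2 with ha
  have hapos : 0 < a := by positivity
  set S : ℝ := (α0 / Kr) * ∑ i, ev i with hS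
  set b : ℝ := max (S / σ2 + 1) a with hb
  have hab : a ≤ b := le_max_right _ _
  have hbpos : 0 < b := lt_of_lt_of_le hapos hab
  have hSnn : 0 ≤ S := mul_nonneg hαK.le (Finset.sum_nonneg fun i _ => hev i)
  have hφa : 1 < φ a := by
    have hda : 0 < d i₀ a := hdpos i₀ a hapos
    have hd_le : d i₀ a ≤ (α0 * ev i₀ + σ2) * a := by
      have h1 : (0:ℝ) < 1 + a := by linarith
      have : a / (1 + a) ≤ a := by
        rw [div_le_iff₀ h1]; nlinarith
      have h2 : α0 * ev i₀ * (a / (1 + a)) ≤ α0 * ev i₀ * a :=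
        mul_le_mul_of_nonneg_left this (mul_nonneg hα.le (hev i₀))
      simp only [hd]; nlinarith [h2]
    have hsingle : ev i₀ / d i₀ a ≤ ∑ i, ev i / d i a :=
      Finset.single_le_sum (fun i _ => div_nonneg (hev i) (hdpos i a hapos).le)
        (Finset.mem_univ i₀)
    have step1 : c₀ / a ≤ (α0 / Kr) * (ev i₀ / d i₀ a) := by
      have : ((α0 / Kr) * ev i₀) / ((α0 * ev i₀ + σ2) * a) ≤ ((α0 / Kr) * ev i₀) / d i₀ a :=
        div_le_div_of_nonneg_left (mul_nonneg hαK.le (hev i₀)) hda hd_le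
      calc c₀ / a = ((α0 / Kr) * ev i₀) / ((α0 * ev i₀ + σ2) * a) := by
            rw [hc₀, div_div]
        _ ≤ ((α0 / Kr) * ev i₀) / d i₀ a := this
        _ = (α0 / Kr) * (ev i₀ / d i₀ a) := by rw [mul_div_assoc]
    have h2 : (1:ℝ) < c₀ / a := by
      have : c₀ / a = 2 := by
        rw [ha]; field_simp
      rw [this]; norm_num
    calc (1:ℝ) < c₀ / a := h2
      _ ≤ (α0 / Kr) * (ev i₀ / d i₀ a) := step1
      _ ≤ φ a := by
          simp only [hφ]
          exact mul_le_mul_of_nonneg_left hsingle hαK.le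
  have hφb : φ b < 1 := by
    have hsb : 0 < σ2 * b := mul_pos hσ hbpos
    have hterm : ∀ i, ev i / d i b ≤ ev i / (σ2 * b) := by
      intro i
      apply div_le_div_of_nonneg_left (hev i) hsb
      have h1 : (0:ℝ) < 1 + b := by linarith
      have : 0 ≤ α0 * ev i * (b / (1 + b)) :=
        mul_nonneg (mul_nonneg hα.le (hev i)) (div_nonneg hbpos.le h1.le)
      simp only [hd]; linarith
    have hsum : φ b ≤ S / (σ2 * b) := by
      simp only [hφ, hS]
      calc (α0 / Kr) * ∑ i, ev i / d i b ≤ (α0 / Kr) * ∑ i, ev i / (σ2 * b) :=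
            mul_le_mul_of_nonneg_left (Finset.sum_le_sum fun i _ => hterm i) hαK.le
        _ = ((α0 / Kr) * ∑ i, ev i) / (σ2 * b) := by
            rw [← Finset.sum_div, mul_div_assoc]
    have hSlt : S < σ2 * b := by
      have : S / σ2 + 1 ≤ b := le_max_left _ _
      nlinarith [mul_le_mul_of_nonneg_left this hσ.le, div_mul_cancel₀ S hσ.ne',
        mul_div_cancel₀ S hσ.ne']
    calc φ b ≤ S / (σ2 * b) := hsum
      _ < 1 := (div_lt_one hsb).mpr hSlt
  have hcont : ContinuousOn φ (Set.Icc a b) := by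
    apply ContinuousOn.mul continuousOn_const
    apply continuousOn_finset_sum
    intro i _
    apply ContinuousOn.div continuousOn_const
    · apply ContinuousOn.add
      · apply ContinuousOn.mul continuousOn_const
        apply ContinuousOn.div continuousOn_id (by fun_prop)
        intro τ hτ
        have : 0 < τ := lt_of_lt_of_le hapos hτ.1
        intro h; linarith [h]
      · exact continuousOn_const.mul continuousOn_id
    · intro τ hτ
      exact (hdpos i τ (lt_of_lt_of_le hapos hτ.1)).ne'
  obtain ⟨τ, hτmem, hτeq⟩ := intermediate_value_Icc' hab hcont ⟨hφb.le, hφa.le⟩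
  have hτpos : 0 < τ := lt_of_lt_of_le hapos hτmem.1
  refine ⟨τ, ⟨hτpos, ?_⟩, ?_⟩
  · rw [hFφ τ hτpos, hτeq, mul_one]
  · rintro y ⟨hy, hyeq⟩
    rw [hFφ y hy] at hyeq
    have hφy : φ y = 1 :=
      (mul_left_cancel₀ hy.ne' (show y * 1 = y * φ y by rw [mul_one]; exact hyeq)).symm
    have : φ y = φ τ := by rw [hφy, hτeq]
    exact hanti.injOn (Set.mem_Ioi.mpr hy) (Set.mem_Ioi.mpr hτpos) this

theorem stmt3 (M K : ℕ) (hK : 1 ≤ K)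
    (R : Matrix (Fin M) (Fin M) ℂ) (hR : R.PosSemidef) (hR0 : R ≠ 0)
    (σ2 α0 : ℝ) (hσ : 0 < σ2) (hα : 0 < α0) :
    ∃! τ : ℝ, 0 < τ ∧
      τ = (α0 / K : ℝ) * (Matrix.trace (R *
        ((α0 / (1 + τ)) • R + σ2 • (1 : Matrix (Fin M) (Fin M) ℂ))⁻¹)).re := by
  classical
  have hKr : (0:ℝ) < (K:ℝ) := by exact_mod_cast Nat.lt_of_lt_of_le Nat.zero_lt_one hK
  set ev : Fin M → ℝ := hR.1.eigenvalues with hevdef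
  have hev : ∀ i, 0 ≤ ev i := fun i => hR.eigenvalues_nonneg i
  have hexists : ∃ i₀, 0 < ev i₀ := by
    by_contra h
    push_neg at h
    have hz : ev = 0 := funext fun i => le_antisymm (h i) (hev i)
    have hsp := hR.1.spectral_theorem
    rw [show hR.1.eigenvalues = ev from rfl, hz] at hsp
    apply hR0
    simpa [show Matrix.diagonal (0 : Fin M → ℂ) = 0 from Matrix.diagonal_zero] using hsp
  obtain ⟨i₀, hi₀⟩ := hexists
  have key : ∀ t : ℝ, 0 < t →
      (Matrix.trace (R * ((α0 / (1 + t)) • R + σ2 • (1 : Matrix (Fin M) (Fin M) ℂ))⁻¹)).re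
        = ∑ i, ev i / ((α0 / (1 + t)) * ev i + σ2) := by
    intro t ht
    have h1 : (0:ℝ) < 1 + t := by linarith
    rw [aux_trace M R hR (α0 / (1 + t)) σ2 (div_nonneg hα.le h1.le) hσ]
    exact Complex.ofReal_re _
  obtain ⟨τ, ⟨hτpos, hτeq⟩, huniq⟩ :=
    aux_core M ev hev i₀ hi₀ σ2 α0 (K : ℝ) hσ hα hKr
  refine ⟨τ, ⟨hτpos, ?_⟩, ?_⟩
  · rw [key τ hτpos]; exact hτeq
  · rintro y ⟨hy, hyeq⟩
    exact huniq y ⟨hy, by rw [key y hy] at hyeq; exact hyeq⟩
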